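/- arXiv:1510.02330 — 3 statements merged into one kernel-verified Lean document; each statement's English description precedes it below -/
import Mathlib

section
/- For jointly distributed random variables X and Y, the supremum over all square-integrable functions f of the linear correlation coefficient ρ(X, f(Y)) is achieved by f(Y) = E[X|Y], and equals ‖E[X|Y] − E[X]‖₂ / √var(X) (assuming var(X) > 0). -/
open MeasureTheory ProbabilityTheory Real
open scoped ENNReal

noncomputable def maxCorr {Ω α β : Type} [MeasurableSpace Ω] [MeasurableSpace α]
    [MeasurableSpace β] (μ : Measure Ω) (X : Ω → α) (Y : Ω → β) : ℝ :=
  sSup {r : ℝ | ∃ (g : α → ℝ) (f : β → ℝ), Measurable g ∧ Measurable f ∧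
    (∫ ω, g (X ω) ∂μ) = 0 ∧ (∫ ω, f (Y ω) ∂μ) = 0 ∧
    (∫ ω, (g (X ω))^2 ∂μ) = 1 ∧ (∫ ω, (f (Y ω))^2 ∂μ) = 1 ∧
    r = ∫ ω, g (X ω) * f (Y ω) ∂μ}

noncomputable def corr {Ω : Type} [MeasurableSpace Ω] (μ : Measure Ω) (U V : Ω → ℝ) : ℝ :=
  (∫ ω, (U ω - ∫ x, U x ∂μ) * (V ω - ∫ x, V x ∂μ) ∂μ) /
    (Real.sqrt (variance U μ) * Real.sqrt (variance V μ))

/-- Doob–Dynkin factorization for real-valued functions. -/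
lemma factor_of_comap {Ω : Type} (Y : Ω → ℝ) (g : Ω → ℝ)
    (hg : @Measurable Ω ℝ (MeasurableSpace.comap Y Real.measurableSpace) _ g) :
    ∃ f : ℝ → ℝ, Measurable f ∧ ∀ ω, g ω = f (Y ω) := by
  letI m : MeasurableSpace Ω := MeasurableSpace.comap Y Real.measurableSpace
  have hsimple : ∀ s : @SimpleFunc Ω m ℝ, ∃ f : ℝ → ℝ, Measurable f ∧ ∀ ω, s ω = f (Y ω) := by
    intro s
    refine @SimpleFunc.induction Ω ℝ m _
      (fun s => ∃ f : ℝ → ℝ, Measurable f ∧ ∀ ω, s ω = f (Y ω)) ?_ ?_ s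
    · intro c t ht
      obtain ⟨B, hB, hBt⟩ := ht
      subst hBt
      refine ⟨B.indicator fun _ => c, measurable_const.indicator hB, fun ω => ?_⟩
      by_cases hω : Y ω ∈ B
      · refine (SimpleFunc.piecewise_apply _ _ _ ω).trans ?_; simp [SimpleFunc.piecewise_apply, Set.indicator_of_mem hω, hω, Set.mem_preimage]
      · refine (SimpleFunc.piecewise_apply _ _ _ ω).trans ?_; simp [SimpleFunc.piecewise_apply, Set.indicator_of_notMem hω, hω, Set.mem_preimage]
    · rintro s₁ s₂ - ⟨f₁, hf₁, he₁⟩ ⟨f₂, hf₂, he₂⟩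
      exact ⟨f₁ + f₂, hf₁.add hf₂, fun ω => by simp [he₁ ω, he₂ ω]⟩
  have hg' : @StronglyMeasurable Ω ℝ _ m g := hg.stronglyMeasurable
  choose f hf hfe using fun n => hsimple (hg'.approx n)
  refine ⟨fun y => (Filter.limsup (fun n => ((f n y : ℝ) : EReal)) Filter.atTop).toReal,
    measurable_ereal_toReal.comp
      (Measurable.limsup fun n => measurable_coe_real_ereal.comp (hf n)), fun ω => ?_⟩
  have happ : Filter.Tendsto (fun n => (hg'.approx n) ω) Filter.atTop (nhds (g ω)) :=
    hg'.tendsto_approx ω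
  have ht : Filter.Tendsto (fun n => ((f n (Y ω) : ℝ) : EReal)) Filter.atTop
      (nhds ((g ω : ℝ) : EReal)) := by
    have := (continuous_coe_real_ereal.tendsto (g ω)).comp happ
    simpa [Function.comp_def, hfe] using this
  dsimp only
  rw [ht.limsup_eq, EReal.toReal_coe]

/-- Cauchy–Schwarz for integrals. -/
lemma integral_mul_le_sqrt_sq {Ω : Type} [MeasurableSpace Ω] {μ : Measure Ω}
    {u v : Ω → ℝ} (hu : MemLp u 2 μ) (hv : MemLp v 2 μ) :
    ∫ ω, u ω * v ω ∂μ ≤ Real.sqrt (∫ ω, (u ω)^2 ∂μ) * Real.sqrt (∫ ω, (v ω)^2 ∂μ) := by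
  have hpqr : (1 : ℝ≥0∞) / 1 = 1 / 2 + 1 / 2 := by
    simp only [one_div, inv_one]
    exact ENNReal.inv_two_add_inv_two.symm
  have huv : Integrable (fun ω => u ω * v ω) μ := by
    have h := hv.smul (r := 1) hu
    exact memLp_one_iff_integrable.mp h
  have hnuv : Integrable (fun ω => ‖u ω‖ * ‖v ω‖) μ := by
    refine huv.norm.congr (Filter.Eventually.of_forall fun ω => ?_)
    simp [norm_mul]
  have h1 : ∫ ω, u ω * v ω ∂μ ≤ ∫ ω, ‖u ω‖ * ‖v ω‖ ∂μ := by
    refine integral_mono_ae huv hnuv (Filter.Eventually.of_forall fun ω => ?_)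
    calc u ω * v ω ≤ |u ω * v ω| := le_abs_self _
    _ = ‖u ω‖ * ‖v ω‖ := by rw [abs_mul, Real.norm_eq_abs, Real.norm_eq_abs]
  have h2 : (2 : ℝ≥0∞) = ENNReal.ofReal 2 := by simp
  have hcs := integral_mul_le_Lp_mul_Lq_of_nonneg (Real.holderConjugate_iff.mpr ⟨one_lt_two, by norm_num⟩ : (2:ℝ).HolderConjugate 2)
      (Filter.Eventually.of_forall fun ω => norm_nonneg (u ω))
      (Filter.Eventually.of_forall fun ω => norm_nonneg (v ω))
      (h2 ▸ hu.norm) (h2 ▸ hv.norm)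
  have hru : ∫ ω, ‖u ω‖ ^ (2:ℝ) ∂μ = ∫ ω, (u ω)^2 ∂μ := by
    refine integral_congr_ae (Filter.Eventually.of_forall fun ω => ?_)
    simp [Real.norm_eq_abs, Real.rpow_two, sq_abs]
  have hrv : ∫ ω, ‖v ω‖ ^ (2:ℝ) ∂μ = ∫ ω, (v ω)^2 ∂μ := by
    refine integral_congr_ae (Filter.Eventually.of_forall fun ω => ?_)
    simp [Real.norm_eq_abs, Real.rpow_two, sq_abs]
  calc ∫ ω, u ω * v ω ∂μ ≤ ∫ ω, ‖u ω‖ * ‖v ω‖ ∂μ := h1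
  _ ≤ (∫ ω, ‖u ω‖ ^ (2:ℝ) ∂μ) ^ ((1:ℝ)/2) * (∫ ω, ‖v ω‖ ^ (2:ℝ) ∂μ) ^ ((1:ℝ)/2) := hcs
  _ = Real.sqrt (∫ ω, (u ω)^2 ∂μ) * Real.sqrt (∫ ω, (v ω)^2 ∂μ) := by
      rw [hru, hrv, ← Real.sqrt_eq_rpow, ← Real.sqrt_eq_rpow]

lemma memLp_two_condexp {Ω : Type} {m mΩ : MeasurableSpace Ω} (hm : m ≤ mΩ) {μ : Measure Ω}
    [IsProbabilityMeasure μ] {X : Ω → ℝ} (hX2 : MemLp X 2 μ) : MemLp (μ[X|m]) 2 μ := by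
  set f : Lp ℝ 2 μ := hX2.toLp X with hf
  have hae : ((condExpL2 ℝ ℝ hm f : lpMeas ℝ ℝ m 2 μ) : Ω → ℝ) =ᵐ[μ] μ[X|m] := by
    refine ae_eq_condExp_of_forall_setIntegral_eq hm (hX2.integrable one_le_two)
      (fun s _ hμs => integrableOn_condExpL2_of_measure_ne_top hm hμs.ne f)
      (fun s hs hμs => ?_) (aestronglyMeasurable_condExpL2 hm f)
    rw [integral_condExpL2_eq hm f hs hμs.ne]
    exact setIntegral_congr_ae (hm s hs) ((hX2.coeFn_toLp).mono fun x hx _ => hx)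
  exact (Lp.memLp _).ae_eq hae

lemma tower_mul {Ω : Type} {m mΩ : MeasurableSpace Ω} (hm : m ≤ mΩ) {μ : Measure Ω}
    [IsProbabilityMeasure μ] {X g : Ω → ℝ} (hX2 : MemLp X 2 μ)
    (hgm : StronglyMeasurable[m] g) (hg2 : MemLp g 2 μ) :
    ∫ ω, g ω * X ω ∂μ = ∫ ω, g ω * (μ[X|m]) ω ∂μ := by
  have hpqr : (1 : ℝ≥0∞) / 1 = 1 / 2 + 1 / 2 := by
    simp only [one_div, inv_one]
    exact ENNReal.inv_two_add_inv_two.symm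
  have hint : Integrable (g * X) μ := memLp_one_iff_integrable.mp (hX2.smul (r := 1) hg2)
  calc ∫ ω, g ω * X ω ∂μ = ∫ ω, (μ[g * X|m]) ω ∂μ := (integral_condExp hm).symm
  _ = ∫ ω, g ω * (μ[X|m]) ω ∂μ := by
      refine integral_congr_ae ?_
      filter_upwards [condExp_mul_of_stronglyMeasurable_left hgm hint (hX2.integrable one_le_two)]
        with ω hω
      exact hω

lemma variance_eq_integral_sq {Ω : Type} [MeasurableSpace Ω] {μ : Measure Ω}
    [IsProbabilityMeasure μ] {U : Ω → ℝ} (hU : MemLp U 2 μ) :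
    variance U μ = ∫ ω, (U ω - ∫ x, U x ∂μ)^2 ∂μ := by
  rw [variance_eq_integral hU.aestronglyMeasurable.aemeasurable]

/-- The supremum over square-integrable functions f (with f(Y) of nonzero
variance) of the Pearson correlation ρ(X, f(Y)) is achieved by f(Y) = E[X|Y] and equals
‖E[X|Y] − E[X]‖₂ / √var(X). -/
theorem stmt0 {Ω : Type} [MeasurableSpace Ω] (μ : Measure Ω) [IsProbabilityMeasure μ]
    (X Y : Ω → ℝ) (hX : Measurable X) (hY : Measurable Y)
    (hX2 : MemLp X 2 μ) (hvar : 0 < variance X μ) :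
    sSup {r : ℝ | ∃ f : ℝ → ℝ, Measurable f ∧ MemLp (fun ω => f (Y ω)) 2 μ ∧
        variance (fun ω => f (Y ω)) μ ≠ 0 ∧ r = corr μ X (fun ω => f (Y ω))}
      = corr μ X (μ[X | MeasurableSpace.comap Y Real.measurableSpace]) ∧
    corr μ X (μ[X | MeasurableSpace.comap Y Real.measurableSpace]) =
      Real.sqrt (∫ ω, ((μ[X | MeasurableSpace.comap Y Real.measurableSpace]) ω
          - ∫ x, X x ∂μ)^2 ∂μ) / Real.sqrt (variance X μ) := by
  have hm : MeasurableSpace.comap Y Real.measurableSpace ≤ _ := hY.comap_le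
  set cE := μ[X|(MeasurableSpace.comap Y Real.measurableSpace)] with hcEdef
  set I : ℝ := ∫ x, X x ∂μ with hIdef
  have hXint : Integrable X μ := hX2.integrable one_le_two
  have hcE2 : MemLp cE 2 μ := memLp_two_condexp hm hX2
  have hIcE : ∫ x, cE x ∂μ = I := integral_condExp hm
  set t : ℝ := ∫ ω, (cE ω - I)^2 ∂μ with htdef
  have ht0 : 0 ≤ t := integral_nonneg fun ω => sq_nonneg _
  have hvE : variance cE μ = t := by
    rw [variance_eq_integral_sq hcE2, hIcE, htdef]
  have hu2 : MemLp (fun ω => cE ω - I) 2 μ := hcE2.sub (memLp_const I)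
  have hsvX : 0 < Real.sqrt (variance X μ) := Real.sqrt_pos.mpr hvar
  -- key identity: replace X by its conditional expectation in the covariance
  have key : ∀ (g : Ω → ℝ), StronglyMeasurable[(MeasurableSpace.comap Y Real.measurableSpace)] g → MemLp g 2 μ →
      ∫ ω, (X ω - I) * (g ω - ∫ x, g x ∂μ) ∂μ
        = ∫ ω, (cE ω - I) * (g ω - ∫ x, g x ∂μ) ∂μ := by
    intro g hgm hg2
    set J := ∫ x, g x ∂μ with hJdef
    have hgJm : StronglyMeasurable[(MeasurableSpace.comap Y Real.measurableSpace)] (fun ω => g ω - J) := hgm.sub stronglyMeasurable_const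
    have hgJ2 : MemLp (fun ω => g ω - J) 2 μ := hg2.sub (memLp_const J)
    have hgJint : Integrable (fun ω => g ω - J) μ := hgJ2.integrable one_le_two
    have hJ0 : ∫ ω, (g ω - J) ∂μ = 0 := by
      rw [integral_sub (hg2.integrable one_le_two) (integrable_const J)]
      simp [hJdef]
    have htow := tower_mul hm hX2 hgJm hgJ2
    have hpqr : (1 : ℝ≥0∞) / 1 = 1 / 2 + 1 / 2 := by
      simp only [one_div, inv_one]
      exact ENNReal.inv_two_add_inv_two.symm
    have hintX : Integrable (fun ω => (g ω - J) * X ω) μ :=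
      memLp_one_iff_integrable.mp (hX2.smul (r := 1) hgJ2)
    have hintE : Integrable (fun ω => (g ω - J) * cE ω) μ :=
      memLp_one_iff_integrable.mp (hcE2.smul (r := 1) hgJ2)
    have expandX : ∫ ω, (X ω - I) * (g ω - J) ∂μ
        = ∫ ω, (g ω - J) * X ω ∂μ - I * ∫ ω, (g ω - J) ∂μ := by
      rw [← integral_const_mul, ← integral_sub hintX (hgJint.const_mul I)]
      exact integral_congr_ae (Filter.Eventually.of_forall fun ω => by ring)
    have expandE : ∫ ω, (cE ω - I) * (g ω - J) ∂μ
        = ∫ ω, (g ω - J) * cE ω ∂μ - I * ∫ ω, (g ω - J) ∂μ := by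
      rw [← integral_const_mul, ← integral_sub hintE (hgJint.const_mul I)]
      exact integral_congr_ae (Filter.Eventually.of_forall fun ω => by ring)
    rw [expandX, expandE, hJ0, mul_zero, sub_zero, sub_zero, htow]
  -- the second claimed equality
  have hnum : ∫ ω, (X ω - I) * (cE ω - I) ∂μ = t := by
    have h := key cE stronglyMeasurable_condExp hcE2
    rw [hIcE] at h
    rw [h, htdef]
    exact integral_congr_ae (Filter.Eventually.of_forall fun ω => by dsimp only; rw [sq])
  have h2 : corr μ X cE = Real.sqrt t / Real.sqrt (variance X μ) := by
    show (∫ ω, (X ω - I) * (cE ω - ∫ x, cE x ∂μ) ∂μ) /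
        (Real.sqrt (variance X μ) * Real.sqrt (variance cE μ)) = _
    rw [hIcE, hnum, hvE]
    rcases eq_or_lt_of_le ht0 with h0 | hpos
    · rw [← h0, Real.sqrt_zero, mul_zero, div_zero, zero_div]
    · have hst : Real.sqrt t ≠ 0 := (Real.sqrt_pos.mpr hpos).ne'
      calc t / (Real.sqrt (variance X μ) * Real.sqrt t)
          = (Real.sqrt t * Real.sqrt t) / (Real.sqrt t * Real.sqrt (variance X μ)) := by
            rw [Real.mul_self_sqrt ht0, mul_comm (Real.sqrt (variance X μ))]
      _ = Real.sqrt t / Real.sqrt (variance X μ) := mul_div_mul_left _ _ hst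
  refine ⟨?_, by rw [h2]⟩
  rw [h2]
  -- upper bound
  have hub : ∀ r ∈ {r : ℝ | ∃ f : ℝ → ℝ, Measurable f ∧ MemLp (fun ω => f (Y ω)) 2 μ ∧
      variance (fun ω => f (Y ω)) μ ≠ 0 ∧ r = corr μ X (fun ω => f (Y ω))},
      r ≤ Real.sqrt t / Real.sqrt (variance X μ) := by
    rintro r ⟨f, hf, hF2, hvF, rfl⟩
    set F := fun ω => f (Y ω) with hFdef
    have hYm : @Measurable Ω ℝ (MeasurableSpace.comap Y Real.measurableSpace) _ Y := Measurable.of_comap_le le_rfl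
    have hFm : StronglyMeasurable[(MeasurableSpace.comap Y Real.measurableSpace)] F := (hf.comp hYm).stronglyMeasurable
    set J := ∫ x, F x ∂μ with hJdef
    have hFJ2 : MemLp (fun ω => F ω - J) 2 μ := hF2.sub (memLp_const J)
    have hvF' : variance F μ = ∫ ω, (F ω - J)^2 ∂μ := variance_eq_integral_sq hF2
    have hvFpos : 0 < variance F μ := (variance_nonneg F μ).lt_of_ne (Ne.symm hvF)
    have hsvF : 0 < Real.sqrt (variance F μ) := Real.sqrt_pos.mpr hvFpos
    have hcs := integral_mul_le_sqrt_sq hu2 hFJ2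
    rw [← htdef, ← hvF'] at hcs
    have hknum := key F hFm hF2
    rw [← hJdef] at hknum
    show (∫ ω, (X ω - I) * (F ω - J) ∂μ) /
        (Real.sqrt (variance X μ) * Real.sqrt (variance F μ)) ≤ _
    calc (∫ ω, (X ω - I) * (F ω - J) ∂μ) /
          (Real.sqrt (variance X μ) * Real.sqrt (variance F μ))
        ≤ (Real.sqrt t * Real.sqrt (variance F μ)) /
          (Real.sqrt (variance X μ) * Real.sqrt (variance F μ)) := by
          have hb : ∫ ω, (X ω - I) * (F ω - J) ∂μ
              ≤ Real.sqrt t * Real.sqrt (variance F μ) := by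
            rw [hknum]
            exact hcs
          exact div_le_div_of_nonneg_right hb (mul_pos hsvX hsvF).le
    _ = Real.sqrt t / Real.sqrt (variance X μ) := by
          rw [mul_comm (Real.sqrt t), mul_comm (Real.sqrt (variance X μ)),
            mul_div_mul_left _ _ hsvF.ne']
  rcases eq_or_ne t 0 with h0 | hne
  · -- degenerate case : conditional expectation is a.s. constant
    have hz : Real.sqrt t / Real.sqrt (variance X μ) = 0 := by
      rw [h0, Real.sqrt_zero, zero_div]
    rw [hz]
    have hall : {r : ℝ | ∃ f : ℝ → ℝ, Measurable f ∧ MemLp (fun ω => f (Y ω)) 2 μ ∧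
        variance (fun ω => f (Y ω)) μ ≠ 0 ∧ r = corr μ X (fun ω => f (Y ω))} ⊆ {0} := by
      rintro r ⟨f, hf, hF2, hvF, rfl⟩
      set F := fun ω => f (Y ω) with hFdef
      have hYm : @Measurable Ω ℝ (MeasurableSpace.comap Y Real.measurableSpace) _ Y := Measurable.of_comap_le le_rfl
      have hFm : StronglyMeasurable[(MeasurableSpace.comap Y Real.measurableSpace)] F := (hf.comp hYm).stronglyMeasurable
      set J := ∫ x, F x ∂μ with hJdef
      have hFJ2 : MemLp (fun ω => F ω - J) 2 μ := hF2.sub (memLp_const J)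
      have hcs := integral_mul_le_sqrt_sq hu2 hFJ2
      rw [← htdef, h0, Real.sqrt_zero, zero_mul] at hcs
      have hcs' := integral_mul_le_sqrt_sq hu2.neg hFJ2
      simp only [Pi.neg_apply, neg_mul, neg_sq] at hcs'
      rw [integral_neg] at hcs'
      rw [← htdef, h0, Real.sqrt_zero, zero_mul] at hcs'
      have hnum0 : ∫ ω, (cE ω - I) * (F ω - J) ∂μ = 0 :=
        le_antisymm hcs (by linarith)
      have : corr μ X F = 0 := by
        show (∫ ω, (X ω - I) * (F ω - J) ∂μ) /
          (Real.sqrt (variance X μ) * Real.sqrt (variance F μ)) = 0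
        have hknum := key F hFm hF2
        rw [← hJdef] at hknum
        rw [hknum, hnum0, zero_div]
      simpa using this
    rcases Set.subset_singleton_iff_eq.mp hall with hS | hS
    · rw [hS, Real.sSup_empty]
    · rw [hS, csSup_singleton]
  · -- nondegenerate case : the sup is attained
    obtain ⟨f₀, hf₀, hfe⟩ := factor_of_comap Y cE stronglyMeasurable_condExp.measurable
    have hFeq : (fun ω => f₀ (Y ω)) = cE := funext fun ω => (hfe ω).symm
    have hmem : Real.sqrt t / Real.sqrt (variance X μ) ∈
        {r : ℝ | ∃ f : ℝ → ℝ, Measurable f ∧ MemLp (fun ω => f (Y ω)) 2 μ ∧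
          variance (fun ω => f (Y ω)) μ ≠ 0 ∧ r = corr μ X (fun ω => f (Y ω))} := by
      refine ⟨f₀, hf₀, ?_, ?_, ?_⟩
      · rw [hFeq]; exact hcE2
      · rw [hFeq, hvE]; exact hne
      · rw [hFeq, h2]
    exact le_antisymm (csSup_le ⟨_, hmem⟩ hub) (le_csSup ⟨_, hub⟩ hmem)
end

section
/- Let X have distribution P on a finite alphabet, W = P_{Y|X} a channel, and let X' be the output of the composed channel W̃∘W (where W̃ is the backward channel P_{X|Y}), so that X → Y → X' is a Markov chain with P_{X'|Y} = P_{X|Y}. Then ρ_m(X;X') = ρ_m(X;Y)². -/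
open MeasureTheory ProbabilityTheory Real

section core
set_option linter.unusedSectionVars false
variable {α β : Type} [Fintype α] [Fintype β]

lemma wCS {ι : Type} [Fintype ι] (w u v : ι → ℝ) (hw : ∀ i, 0 ≤ w i) :
    (∑ i, w i * (u i * v i)) ^ 2 ≤ (∑ i, w i * u i ^ 2) * (∑ i, w i * v i ^ 2) := by
  have h := Finset.sum_mul_sq_le_sq_mul_sq Finset.univ (fun i => Real.sqrt (w i) * u i)
      (fun i => Real.sqrt (w i) * v i)
  have e1 : ∀ i : ι, (Real.sqrt (w i) * u i) * (Real.sqrt (w i) * v i) = w i * (u i * v i) := by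
    intro i
    rw [show (Real.sqrt (w i) * u i) * (Real.sqrt (w i) * v i)
        = (Real.sqrt (w i) * Real.sqrt (w i)) * (u i * v i) by ring,
      Real.mul_self_sqrt (hw i)]
  have e2 : ∀ i : ι, (Real.sqrt (w i) * u i) ^ 2 = w i * u i ^ 2 := by
    intro i; rw [mul_pow, Real.sq_sqrt (hw i)]
  have e3 : ∀ i : ι, (Real.sqrt (w i) * v i) ^ 2 = w i * v i ^ 2 := by
    intro i; rw [mul_pow, Real.sq_sqrt (hw i)]
  calc (∑ i, w i * (u i * v i)) ^ 2
      = (∑ i, (Real.sqrt (w i) * u i) * (Real.sqrt (w i) * v i)) ^ 2 := by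
        rw [Finset.sum_congr rfl fun i _ => (e1 i).symm]
    _ ≤ (∑ i, (Real.sqrt (w i) * u i) ^ 2) * (∑ i, (Real.sqrt (w i) * v i) ^ 2) := h
    _ = (∑ i, w i * u i ^ 2) * (∑ i, w i * v i ^ 2) := by
        rw [Finset.sum_congr rfl fun i _ => e2 i, Finset.sum_congr rfl fun i _ => e3 i]

noncomputable def Qd (P : α → β → ℝ) (y : β) : ℝ := ∑ x, P x y
noncomputable def avd (P : α → β → ℝ) (g : α → ℝ) (y : β) : ℝ := ∑ x, P x y * g x
noncomputable def md (P : α → β → ℝ) (g : α → ℝ) (y : β) : ℝ := avd P g y / Qd P y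
noncomputable def Ad (P : α → β → ℝ) (g : α → ℝ) : ℝ := ∑ y, Qd P y * md P g y ^ 2

variable {P : α → β → ℝ} (hP : ∀ x y, 0 ≤ P x y)

include hP

lemma Qd_nonneg (y : β) : 0 ≤ Qd P y := Finset.sum_nonneg fun x _ => hP x y

lemma av_eq (g : α → ℝ) (y : β) : avd P g y = Qd P y * md P g y := by
  by_cases h : Qd P y = 0
  · have hz : avd P g y = 0 := by
      refine Finset.sum_eq_zero fun x _ => ?_
      have hx : P x y = 0 :=
        le_antisymm (h ▸ Finset.single_le_sum (fun x _ => hP x y) (Finset.mem_univ x)) (hP x y)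
      rw [hx, zero_mul]
    rw [hz, md, hz, zero_div, mul_zero]
  · rw [md, mul_div_cancel₀ _ h]

lemma Ad_nonneg (g : α → ℝ) : 0 ≤ Ad P g :=
  Finset.sum_nonneg fun y _ => mul_nonneg (Qd_nonneg hP y) (sq_nonneg _)

lemma Ad_le_one (g : α → ℝ) (hg1 : ∑ y, avd P (fun x => g x ^ 2) y = 1) : Ad P g ≤ 1 := by
  rw [← hg1]
  refine Finset.sum_le_sum fun y _ => ?_
  by_cases h : Qd P y = 0
  · have hm : md P g y = 0 := by rw [md, h, div_zero]
    rw [hm]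
    simp only [ne_eq, OfNat.ofNat_ne_zero, not_false_eq_true, zero_pow, mul_zero]
    exact Finset.sum_nonneg fun x _ => mul_nonneg (hP x y) (sq_nonneg _)
  · have hQpos : 0 < Qd P y := lt_of_le_of_ne (Qd_nonneg hP y) (Ne.symm h)
    have hCS : (avd P g y) ^ 2 ≤ (∑ x, P x y * g x ^ 2) * Qd P y := by
      have := wCS (fun x => P x y) g (fun _ => 1) (fun x => hP x y)
      simpa [Qd, avd] using this
    have heq : Qd P y * md P g y ^ 2 = avd P g y ^ 2 / Qd P y := by
      rw [md]; field_simp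
    rw [heq, div_le_iff₀ hQpos]
    calc avd P g y ^ 2 ≤ (∑ x, P x y * g x ^ 2) * Qd P y := hCS
      _ = avd P (fun x => g x ^ 2) y * Qd P y := rfl

lemma CS2 (g : α → ℝ) (f : β → ℝ) :
    (∑ y, Qd P y * (md P g y * f y)) ^ 2 ≤ Ad P g * (∑ y, Qd P y * f y ^ 2) :=
  wCS (Qd P) (md P g) f (Qd_nonneg hP)

lemma f_construct (g : α → ℝ) (hg0 : ∑ y, avd P g y = 0) (hA : Ad P g ≠ 0) :
    (∑ y, Qd P y * (md P g y / Real.sqrt (Ad P g)) = 0) ∧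
    (∑ y, Qd P y * (md P g y / Real.sqrt (Ad P g)) ^ 2 = 1) ∧
    (∑ y, Qd P y * (md P g y * (md P g y / Real.sqrt (Ad P g))) = Real.sqrt (Ad P g)) := by
  have hA0 : 0 ≤ Ad P g := Ad_nonneg hP g
  have hApos : 0 < Ad P g := lt_of_le_of_ne hA0 (Ne.symm hA)
  have hs : 0 < Real.sqrt (Ad P g) := Real.sqrt_pos.mpr hApos
  have hQm : ∑ y, Qd P y * md P g y = 0 := by
    rw [← hg0]; exact Finset.sum_congr rfl fun y _ => (av_eq hP g y).symm
  refine ⟨?_, ?_, ?_⟩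
  · rw [show ∑ y, Qd P y * (md P g y / Real.sqrt (Ad P g))
        = (∑ y, Qd P y * md P g y) / Real.sqrt (Ad P g) by
      rw [Finset.sum_div]; exact Finset.sum_congr rfl fun y _ => (mul_div_assoc _ _ _).symm]
    rw [hQm, zero_div]
  · have h2 : ∀ y, Qd P y * (md P g y / Real.sqrt (Ad P g)) ^ 2
        = (Qd P y * md P g y ^ 2) / Ad P g := by
      intro y
      rw [div_pow, Real.sq_sqrt hA0]
      ring
    rw [Finset.sum_congr rfl fun y _ => h2 y, ← Finset.sum_div]
    exact div_self hA
  · have h3 : ∀ y, Qd P y * (md P g y * (md P g y / Real.sqrt (Ad P g)))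
        = (Qd P y * md P g y ^ 2) / Real.sqrt (Ad P g) := by
      intro y; ring
    rw [Finset.sum_congr rfl fun y _ => h3 y, ← Finset.sum_div]
    exact Real.div_sqrt

/-- abbreviation for feasibility of `g` -/
def Feas (P : α → β → ℝ) (g : α → ℝ) : Prop :=
  (∑ y, avd P g y = 0) ∧ (∑ y, avd P (fun x => g x ^ 2) y = 1)

theorem core_thm (S T : Set ℝ)
    (hS : ∀ r, r ∈ S ↔ ∃ (g : α → ℝ) (f : β → ℝ), Feas P g ∧ (∑ y, Qd P y * f y = 0) ∧
      (∑ y, Qd P y * f y ^ 2 = 1) ∧ r = ∑ y, Qd P y * (md P g y * f y))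
    (hT : ∀ t, t ∈ T ↔ ∃ (g h : α → ℝ), Feas P g ∧ Feas P h ∧
      t = ∑ y, Qd P y * (md P g y * md P h y)) :
    sSup T = (sSup S) ^ 2 := by
  classical
  have hSub : ∀ r ∈ S, r ≤ 1 := by
    intro r hr
    obtain ⟨g, f, ⟨hg0, hg1⟩, hf0, hf1, hr5⟩ := (hS r).mp hr
    have h1 : r ^ 2 ≤ Ad P g * 1 := by
      rw [hr5, ← hf1]; exact CS2 hP g f
    have h2 : Ad P g ≤ 1 := Ad_le_one hP g hg1
    nlinarith [sq_nonneg (r - 1)]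
  have hSbdd : BddAbove S := ⟨1, fun r hr => hSub r hr⟩
  have hρ0 : 0 ≤ sSup S := by
    rcases Set.eq_empty_or_nonempty S with h | ⟨s, hs⟩
    · rw [h, Real.sSup_empty]
    · obtain ⟨g, f, hg, hf0, hf1, hs5⟩ := (hS s).mp hs
      have hneg : -s ∈ S := by
        refine (hS (-s)).mpr ⟨g, fun y => -f y, hg, ?_, ?_, ?_⟩
        · simpa [mul_neg, Finset.sum_neg_distrib] using hf0
        · simpa [neg_sq] using hf1
        · rw [hs5, ← Finset.sum_neg_distrib]
          exact Finset.sum_congr rfl fun y _ => by ring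
      have h1 := le_csSup hSbdd hs
      have h2 := le_csSup hSbdd hneg
      linarith
  have hkey1 : ∀ g, Feas P g → Real.sqrt (Ad P g) ≤ sSup S := by
    intro g ⟨hg0, hg1⟩
    by_cases hA : Ad P g = 0
    · rw [hA, Real.sqrt_zero]; exact hρ0
    · obtain ⟨c0, c1, c2⟩ := f_construct hP g hg0 hA
      exact le_csSup hSbdd ((hS _).mpr
        ⟨g, fun y => md P g y / Real.sqrt (Ad P g), ⟨hg0, hg1⟩, c0, c1, c2.symm⟩)
  have hub : ∀ t ∈ T, t ≤ (sSup S) ^ 2 := by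
    intro t ht
    obtain ⟨g, h, hg, hh, ht5⟩ := (hT t).mp ht
    have hAg := Ad_nonneg hP g
    have hAh := Ad_nonneg hP h
    have hCS : t ^ 2 ≤ Ad P g * Ad P h := by
      rw [ht5]
      calc (∑ y, Qd P y * (md P g y * md P h y)) ^ 2
          ≤ Ad P g * (∑ y, Qd P y * md P h y ^ 2) := CS2 hP g (md P h)
        _ = Ad P g * Ad P h := rfl
    have h1 : t ≤ Real.sqrt (Ad P g) * Real.sqrt (Ad P h) := by
      calc t ≤ |t| := le_abs_self t
        _ = Real.sqrt (t ^ 2) := (Real.sqrt_sq_eq_abs t).symm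
        _ ≤ Real.sqrt (Ad P g * Ad P h) := Real.sqrt_le_sqrt hCS
        _ = Real.sqrt (Ad P g) * Real.sqrt (Ad P h) := Real.sqrt_mul hAg _
    calc t ≤ Real.sqrt (Ad P g) * Real.sqrt (Ad P h) := h1
      _ ≤ sSup S * sSup S :=
          mul_le_mul (hkey1 g hg) (hkey1 h hh) (Real.sqrt_nonneg _) hρ0
      _ = (sSup S) ^ 2 := (sq (sSup S)).symm
  have hTbdd : BddAbove T := ⟨(sSup S) ^ 2, fun t ht => hub t ht⟩
  have hAdmem : ∀ g, Feas P g → Ad P g ∈ T := by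
    intro g hg
    refine (hT _).mpr ⟨g, g, hg, hg, ?_⟩
    exact Finset.sum_congr rfl fun y _ => by rw [sq]
  rcases Set.eq_empty_or_nonempty S with hSe | hSne
  · have hρ : sSup S = 0 := by rw [hSe, Real.sSup_empty]
    rw [hρ]
    norm_num
    rcases Set.eq_empty_or_nonempty T with hTe | ⟨t, ht⟩
    · rw [hTe, Real.sSup_empty]
    · have hTneg : ∀ u ∈ T, -u ∈ T := by
        intro u hu
        obtain ⟨g, h, hg, hh, hu5⟩ := (hT u).mp hu
        refine (hT (-u)).mpr ⟨g, fun x => -h x, hg, ⟨?_, ?_⟩, ?_⟩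
        · simpa [avd, mul_neg, Finset.sum_neg_distrib] using hh.1
        · simpa [neg_sq] using hh.2
        · have hmd : ∀ y, md P (fun x => -h x) y = -md P h y := by
            intro y
            rw [md, md, show avd P (fun x => -h x) y = -avd P h y by
              rw [avd, avd, ← Finset.sum_neg_distrib]
              exact Finset.sum_congr rfl fun x _ => by ring, neg_div]
          rw [hu5, ← Finset.sum_neg_distrib]
          exact Finset.sum_congr rfl fun y _ => by rw [hmd y]; ring
      have ht0 : t ≤ 0 := by simpa [hρ] using hub t ht
      have ht0' : -t ≤ 0 := by simpa [hρ] using hub (-t) (hTneg t ht)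
      have : t = 0 := le_antisymm ht0 (by linarith)
      refine le_antisymm (csSup_le ⟨t, ht⟩ fun r hr => by simpa [hρ] using hub r hr) ?_
      rw [← this]
      exact le_csSup hTbdd ht
  · have hlb : ∀ s ∈ S, s ^ 2 ≤ sSup T := by
      intro s hs
      obtain ⟨g, f, hg, hf0, hf1, hs5⟩ := (hS s).mp hs
      have h1 : s ^ 2 ≤ Ad P g := by
        have := CS2 hP g f
        rw [hf1, mul_one] at this
        rw [hs5]; exact this
      exact h1.trans (le_csSup hTbdd (hAdmem g hg))
    have hT0 : 0 ≤ sSup T := by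
      obtain ⟨s, hs⟩ := hSne
      exact le_trans (sq_nonneg s) (hlb s hs)
    have hρle : sSup S ≤ Real.sqrt (sSup T) := by
      refine csSup_le hSne fun s hs => ?_
      calc s ≤ |s| := le_abs_self s
        _ = Real.sqrt (s ^ 2) := (Real.sqrt_sq_eq_abs s).symm
        _ ≤ Real.sqrt (sSup T) := Real.sqrt_le_sqrt (hlb s hs)
    have hTne : T.Nonempty := by
      obtain ⟨s, hs⟩ := hSne
      obtain ⟨g, f, hg, -, -, -⟩ := (hS s).mp hs
      exact ⟨Ad P g, hAdmem g hg⟩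
    refine le_antisymm (csSup_le hTne hub) ?_
    calc (sSup S) ^ 2 ≤ (Real.sqrt (sSup T)) ^ 2 := by
          exact pow_le_pow_left₀ hρ0 hρle 2
      _ = sSup T := Real.sq_sqrt hT0
  
end core


lemma markov_eq {Ω α β : Type} [MeasurableSpace Ω] [StandardBorelSpace Ω] [Nonempty Ω]
    [MeasurableSpace α] [MeasurableSingletonClass α]
    [MeasurableSpace β] [MeasurableSingletonClass β]
    (μ : Measure Ω) [IsProbabilityMeasure μ]
    (X X' : Ω → α) (Y : Ω → β)
    (hX : Measurable X) (hX' : Measurable X') (hY : Measurable Y)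
    (hMarkov : CondIndepFun (MeasurableSpace.comap Y inferInstance) hY.comap_le X X' μ)
    (x x' : α) (y : β) :
    μ (X ⁻¹' {x} ∩ X' ⁻¹' {x'} ∩ Y ⁻¹' {y}) * μ (Y ⁻¹' {y})
      = μ (X ⁻¹' {x} ∩ Y ⁻¹' {y}) * μ (X' ⁻¹' {x'} ∩ Y ⁻¹' {y}) := by
  classical
  set A := X ⁻¹' {x} with hA
  set B := X' ⁻¹' {x'} with hB
  set C := Y ⁻¹' {y} with hCdef
  by_cases hCne : C = ∅
  · have h0 : μ C = 0 := by rw [hCne]; simp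
    have h1 : μ (A ∩ B ∩ C) * μ C = 0 := by rw [h0, mul_zero]
    have h2 : μ (A ∩ C) = 0 := measure_mono_null Set.inter_subset_right h0
    rw [h1, h2, zero_mul]
  · obtain ⟨ω₀, hω₀⟩ := Set.nonempty_iff_ne_empty.mpr hCne
    have hCm : MeasurableSet[MeasurableSpace.comap Y inferInstance] C :=
      ⟨{y}, measurableSet_singleton y, rfl⟩
    have hCm0 : MeasurableSet C := hY.comap_le C hCm
    have hAm : MeasurableSet A := hX (measurableSet_singleton x)
    have hBm : MeasurableSet B := hX' (measurableSet_singleton x')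
    have hprod := (condIndepFun_iff_condExp_inter_preimage_eq_mul hX hX').mp hMarkov
      {x} {x'} (measurableSet_singleton x) (measurableSet_singleton x')
    set uA := μ⟦A | MeasurableSpace.comap Y inferInstance⟧ with huA
    set uB := μ⟦B | MeasurableSpace.comap Y inferInstance⟧ with huB
    set c := uB ω₀ with hc
    -- uB is constant on C
    have hconst : ∀ ω ∈ C, uB ω = c := by
      intro ω hω
      by_contra hne
      have hmeas : MeasurableSet[MeasurableSpace.comap Y inferInstance] (uB ⁻¹' {uB ω}) :=
        (stronglyMeasurable_condExp.measurable) (measurableSet_singleton _)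
      obtain ⟨T, -, hT⟩ := hmeas
      have hωmem : ω ∈ Y ⁻¹' T := by rw [hT]; exact rfl
      have hmem : ω₀ ∈ Y ⁻¹' T := by
        have hYeq : Y ω₀ = Y ω := by
          have h1 : Y ω₀ = y := hω₀
          have h2 : Y ω = y := hω
          rw [h1, h2]
        simpa [Set.mem_preimage, hYeq] using hωmem
      rw [hT] at hmem
      exact hne (hmem.symm)
    have hintAB : Integrable ((A ∩ B).indicator (fun _ => (1:ℝ))) μ :=
      (integrable_const (1:ℝ)).indicator (hAm.inter hBm)
    have hintA : Integrable (A.indicator (fun _ => (1:ℝ))) μ :=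
      (integrable_const (1:ℝ)).indicator hAm
    have hintB : Integrable (B.indicator (fun _ => (1:ℝ))) μ :=
      (integrable_const (1:ℝ)).indicator hBm
    have hB1 : ∫ ω in C, uB ω ∂μ = (μ (C ∩ B)).toReal := by
      rw [huB, setIntegral_condExp hY.comap_le hintB hCm, setIntegral_indicator hBm,
        setIntegral_const, smul_eq_mul, mul_one, measureReal_def]
    have hB2 : ∫ ω in C, uB ω ∂μ = (μ C).toReal * c := by
      rw [setIntegral_congr_fun (g := fun _ => c) hCm0 (fun ω hω => hconst ω hω),
        setIntegral_const, smul_eq_mul, measureReal_def]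
    have hAB1 : ∫ ω in C, uA ω * uB ω ∂μ = (μ (C ∩ (A ∩ B))).toReal := by
      have hcongr := setIntegral_congr_ae (μ := μ)
        (g := fun ω => uA ω * uB ω) hCm0 (hprod.mono (fun ω hω _ => hω))
      rw [← hcongr, setIntegral_condExp hY.comap_le hintAB hCm,
        setIntegral_indicator (hAm.inter hBm), setIntegral_const, smul_eq_mul, mul_one, measureReal_def]
    have hAB2 : ∫ ω in C, uA ω * uB ω ∂μ = c * (μ (C ∩ A)).toReal := by
      rw [setIntegral_congr_fun (g := fun ω => uA ω * c) hCm0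
        (fun ω hω => by rw [hconst ω hω]),
        integral_mul_const, setIntegral_condExp hY.comap_le hintA hCm, setIntegral_indicator hAm,
        setIntegral_const, smul_eq_mul, mul_one, mul_comm, measureReal_def]
    have key : (μ (C ∩ (A ∩ B))).toReal * (μ C).toReal
        = (μ (C ∩ A)).toReal * (μ (C ∩ B)).toReal := by
      rw [← hAB1, hAB2, ← hB1, hB2]; ring
    have hfin : ∀ s : Set Ω, μ s ≠ ⊤ := fun s => measure_ne_top μ s
    have hEnn : (μ (C ∩ (A ∩ B)) * μ C) = (μ (C ∩ A) * μ (C ∩ B)) := by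
      refine (ENNReal.toReal_eq_toReal_iff' (ENNReal.mul_ne_top (hfin _) (hfin _))
        (ENNReal.mul_ne_top (hfin _) (hfin _))).mp ?_
      rw [ENNReal.toReal_mul, ENNReal.toReal_mul]; exact key
    calc μ (A ∩ B ∩ C) * μ C = μ (C ∩ (A ∩ B)) * μ C := by rw [Set.inter_comm]
      _ = μ (C ∩ A) * μ (C ∩ B) := hEnn
      _ = μ (A ∩ C) * μ (B ∩ C) := by rw [Set.inter_comm C A, Set.inter_comm C B]


lemma int_mul_eq_sum {Ω α β : Type} [MeasurableSpace Ω]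
    [MeasurableSpace α] [MeasurableSingletonClass α] [Fintype α]
    [MeasurableSpace β] [MeasurableSingletonClass β] [Fintype β]
    (μ : Measure Ω) [IsProbabilityMeasure μ]
    (X : Ω → α) (Y : Ω → β) (hX : Measurable X) (hY : Measurable Y) (g : α → ℝ) (f : β → ℝ) :
    ∫ ω, g (X ω) * f (Y ω) ∂μ
      = ∑ x : α, ∑ y : β, (μ (X ⁻¹' {x} ∩ Y ⁻¹' {y})).toReal * (g x * f y) := by
  classical
  have hZ : Measurable fun ω => (X ω, Y ω) := hX.prodMk hY
  have hφ : Measurable fun p : α × β => g p.1 * f p.2 := measurable_of_countable _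
  haveI : IsProbabilityMeasure (μ.map fun ω => (X ω, Y ω)) :=
    Measure.isProbabilityMeasure_map hZ.aemeasurable
  have h1 : ∫ ω, g (X ω) * f (Y ω) ∂μ
      = ∫ p, g p.1 * f p.2 ∂(μ.map fun ω => (X ω, Y ω)) := by
    rw [integral_map hZ.aemeasurable hφ.aestronglyMeasurable]
  rw [h1, integral_fintype .of_finite, Fintype.sum_prod_type]
  refine Finset.sum_congr rfl fun x _ => Finset.sum_congr rfl fun y _ => ?_
  rw [measureReal_def, Measure.map_apply hZ (measurableSet_singleton _), smul_eq_mul]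
  have hset : (fun ω => (X ω, Y ω)) ⁻¹' {(x, y)} = X ⁻¹' {x} ∩ Y ⁻¹' {y} := by
    ext ω; simp [Prod.ext_iff]
  rw [hset]


lemma measure_toReal_partition {Ω γ : Type} [MeasurableSpace Ω] [MeasurableSpace γ]
    [MeasurableSingletonClass γ] [Fintype γ] (μ : Measure Ω) [IsProbabilityMeasure μ]
    (Z : Ω → γ) (hZ : Measurable Z) (S : Set Ω) (hS : MeasurableSet S) :
    (μ S).toReal = ∑ z : γ, (μ (S ∩ Z ⁻¹' {z})).toReal := by
  classical
  have hdecomp : S = ⋃ z ∈ (Finset.univ : Finset γ), S ∩ Z ⁻¹' {z} := by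
    ext ω; simp
  have hdisj : Set.PairwiseDisjoint (↑(Finset.univ : Finset γ)) (fun z => S ∩ Z ⁻¹' {z}) := by
    intro z _ z' _ hne
    refine Set.disjoint_left.mpr fun ω hω hω' => ?_
    exact hne (hω.2.symm.trans hω'.2)
  have hmeas : ∀ z ∈ (Finset.univ : Finset γ), MeasurableSet (S ∩ Z ⁻¹' {z}) :=
    fun z _ => hS.inter (hZ (measurableSet_singleton z))
  have h1 : μ S = ∑ z, μ (S ∩ Z ⁻¹' {z}) := by
    conv_lhs => rw [hdecomp]
    exact measure_biUnion_finset hdisj hmeas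
  rw [h1, ENNReal.toReal_sum (fun z _ => measure_ne_top μ _)]

lemma trXXp {Ω α β : Type} [MeasurableSpace Ω] [StandardBorelSpace Ω] [Nonempty Ω]
    [MeasurableSpace α] [MeasurableSingletonClass α] [Fintype α]
    [MeasurableSpace β] [MeasurableSingletonClass β] [Fintype β]
    (μ : Measure Ω) [IsProbabilityMeasure μ]
    (X X' : Ω → α) (Y : Ω → β)
    (hX : Measurable X) (hX' : Measurable X') (hY : Measurable Y)
    (hMarkov : CondIndepFun (MeasurableSpace.comap Y inferInstance) hY.comap_le X X' μ)
    (hBackward : ∀ (x : α) (y : β),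
      μ (X' ⁻¹' {x} ∩ Y ⁻¹' {y}) = μ (X ⁻¹' {x} ∩ Y ⁻¹' {y}))
    (g h : α → ℝ) :
    ∫ ω, g (X ω) * h (X' ω) ∂μ
      = ∑ y, Qd (fun x y => (μ (X ⁻¹' {x} ∩ Y ⁻¹' {y})).toReal) y *
          (md (fun x y => (μ (X ⁻¹' {x} ∩ Y ⁻¹' {y})).toReal) g y *
           md (fun x y => (μ (X ⁻¹' {x} ∩ Y ⁻¹' {y})).toReal) h y) := by
  classical
  set P : α → β → ℝ := fun x y => (μ (X ⁻¹' {x} ∩ Y ⁻¹' {y})).toReal with hPdef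
  have hP : ∀ x y, 0 ≤ P x y := fun _ _ => ENNReal.toReal_nonneg
  set J : α → α → β → ℝ := fun x x' y => (μ (X ⁻¹' {x} ∩ X' ⁻¹' {x'} ∩ Y ⁻¹' {y})).toReal
    with hJdef
  have hQQ : ∀ y, (μ (Y ⁻¹' {y})).toReal = Qd P y := by
    intro y
    rw [measure_toReal_partition μ X hX _ (hY (measurableSet_singleton y)), Qd]
    exact Finset.sum_congr rfl fun x _ =>
      congrArg ENNReal.toReal (congrArg μ (Set.inter_comm _ _))
  have hRsum : ∀ x x', (μ (X ⁻¹' {x} ∩ X' ⁻¹' {x'})).toReal = ∑ y, J x x' y :=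
    fun x x' => measure_toReal_partition μ Y hY _
      ((hX (measurableSet_singleton x)).inter (hX' (measurableSet_singleton x')))
  have hJQ : ∀ x x' y, J x x' y * Qd P y = P x y * P x' y := by
    intro x x' y
    have hm := congrArg ENNReal.toReal (markov_eq μ X X' Y hX hX' hY hMarkov x x' y)
    rw [ENNReal.toReal_mul, ENNReal.toReal_mul, hBackward x' y, hQQ y] at hm
    exact hm
  calc ∫ ω, g (X ω) * h (X' ω) ∂μ
      = ∑ x, ∑ x', (μ (X ⁻¹' {x} ∩ X' ⁻¹' {x'})).toReal * (g x * h x') :=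
        int_mul_eq_sum μ X X' hX hX' g h
    _ = ∑ x, ∑ x', ∑ y, J x x' y * (g x * h x') := by
        refine Finset.sum_congr rfl fun x _ => Finset.sum_congr rfl fun x' _ => ?_
        rw [hRsum x x', Finset.sum_mul]
    _ = ∑ y, ∑ x, ∑ x', J x x' y * (g x * h x') := by
        rw [show (∑ x, ∑ x', ∑ y, J x x' y * (g x * h x'))
            = ∑ x, ∑ y, ∑ x', J x x' y * (g x * h x') from
          Finset.sum_congr rfl fun x _ => Finset.sum_comm, Finset.sum_comm]
    _ = ∑ y, Qd P y * (md P g y * md P h y) := by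
        refine Finset.sum_congr rfl fun y _ => ?_
        by_cases hQ : Qd P y = 0
        · have hμY : μ (Y ⁻¹' {y}) = 0 := by
            have h2 := hQQ y
            rw [hQ] at h2
            exact ((ENNReal.toReal_eq_zero_iff _).mp h2).resolve_right (measure_ne_top μ _)
          have hJ0 : ∀ x x', J x x' y = 0 := by
            intro x x'
            have hz : μ (X ⁻¹' {x} ∩ X' ⁻¹' {x'} ∩ Y ⁻¹' {y}) = 0 :=
              measure_mono_null Set.inter_subset_right hμY
            simp [hJdef, hz]
          rw [hQ, zero_mul]
          exact Finset.sum_eq_zero fun x _ => Finset.sum_eq_zero fun x' _ => by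
            rw [hJ0, zero_mul]
        · have hJeq : ∀ x x', J x x' y = P x y * P x' y / Qd P y := fun x x' =>
            eq_div_of_mul_eq hQ (hJQ x x' y)
          calc ∑ x, ∑ x', J x x' y * (g x * h x')
              = ∑ x, ∑ x', (P x y * g x) * ((P x' y * h x') * (Qd P y)⁻¹) := by
                refine Finset.sum_congr rfl fun x _ => Finset.sum_congr rfl fun x' _ => ?_
                rw [hJeq x x', div_eq_mul_inv]; ring
            _ = ∑ x, (P x y * g x) * ((∑ x', P x' y * h x') * (Qd P y)⁻¹) := by
                refine Finset.sum_congr rfl fun x _ => ?_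
                rw [← Finset.mul_sum, ← Finset.sum_mul]
            _ = (∑ x, P x y * g x) * ((∑ x', P x' y * h x') * (Qd P y)⁻¹) := by
                rw [← Finset.sum_mul]
            _ = Qd P y * (md P g y * md P h y) := by
                have h1 : (∑ x, P x y * g x) = avd P g y := rfl
                have h2 : (∑ x', P x' y * h x') = avd P h y := rfl
                rw [h1, h2, av_eq hP g y, av_eq hP h y]
                field_simp

section transfer
variable {Ω α β : Type} [MeasurableSpace Ω]
    [MeasurableSpace α] [MeasurableSingletonClass α] [Fintype α]
    [MeasurableSpace β] [MeasurableSingletonClass β] [Fintype β]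
    (μ : Measure Ω) [IsProbabilityMeasure μ]
    (X X' : Ω → α) (Y : Ω → β)

lemma trXYav (hX : Measurable X) (hY : Measurable Y) (g : α → ℝ) (f : β → ℝ) :
    ∫ ω, g (X ω) * f (Y ω) ∂μ
      = ∑ y, avd (fun x y => (μ (X ⁻¹' {x} ∩ Y ⁻¹' {y})).toReal) g y * f y := by
  rw [int_mul_eq_sum μ X Y hX hY g f, Finset.sum_comm]
  refine Finset.sum_congr rfl fun y _ => ?_
  rw [avd, Finset.sum_mul]
  refine Finset.sum_congr rfl fun x _ => ?_
  ring

lemma trXY (hX : Measurable X) (hY : Measurable Y) (g : α → ℝ) (f : β → ℝ) :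
    ∫ ω, g (X ω) * f (Y ω) ∂μ
      = ∑ y, Qd (fun x y => (μ (X ⁻¹' {x} ∩ Y ⁻¹' {y})).toReal) y *
          (md (fun x y => (μ (X ⁻¹' {x} ∩ Y ⁻¹' {y})).toReal) g y * f y) := by
  rw [trXYav μ X Y hX hY g f]
  refine Finset.sum_congr rfl fun y _ => ?_
  rw [av_eq (fun _ _ => ENNReal.toReal_nonneg) g y]
  ring

lemma trX (hX : Measurable X) (hY : Measurable Y) (g : α → ℝ) :
    ∫ ω, g (X ω) ∂μ
      = ∑ y, avd (fun x y => (μ (X ⁻¹' {x} ∩ Y ⁻¹' {y})).toReal) g y := by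
  have h := trXYav μ X Y hX hY g (fun _ => 1)
  simpa using h

lemma trY (hX : Measurable X) (hY : Measurable Y) (f : β → ℝ) :
    ∫ ω, f (Y ω) ∂μ
      = ∑ y, Qd (fun x y => (μ (X ⁻¹' {x} ∩ Y ⁻¹' {y})).toReal) y * f y := by
  have h := trXYav μ X Y hX hY (fun _ => (1:ℝ)) f
  simpa [avd, Qd] using h

lemma trXpav (hX' : Measurable X') (hY : Measurable Y)
    (hBackward : ∀ (x : α) (y : β),
      μ (X' ⁻¹' {x} ∩ Y ⁻¹' {y}) = μ (X ⁻¹' {x} ∩ Y ⁻¹' {y}))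
    (g : α → ℝ) (f : β → ℝ) :
    ∫ ω, g (X' ω) * f (Y ω) ∂μ
      = ∑ y, avd (fun x y => (μ (X ⁻¹' {x} ∩ Y ⁻¹' {y})).toReal) g y * f y := by
  rw [int_mul_eq_sum μ X' Y hX' hY g f]
  simp only [hBackward]
  rw [Finset.sum_comm]
  refine Finset.sum_congr rfl fun y _ => ?_
  rw [avd, Finset.sum_mul]
  refine Finset.sum_congr rfl fun x _ => ?_
  ring

lemma trXp (hX' : Measurable X') (hY : Measurable Y)
    (hBackward : ∀ (x : α) (y : β),
      μ (X' ⁻¹' {x} ∩ Y ⁻¹' {y}) = μ (X ⁻¹' {x} ∩ Y ⁻¹' {y}))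
    (g : α → ℝ) :
    ∫ ω, g (X' ω) ∂μ
      = ∑ y, avd (fun x y => (μ (X ⁻¹' {x} ∩ Y ⁻¹' {y})).toReal) g y := by
  have h := trXpav μ X X' Y hX' hY hBackward g (fun _ => 1)
  simpa using h

end transfer


/-- If X → Y → X' is a Markov chain where X' is drawn from the backward
channel P_{X|Y} (i.e., (X',Y) has the same joint law as (X,Y)), with X finitely valued,
then ρ_m(X;X') = ρ_m(X;Y)². -/
theorem stmt3 {Ω α β : Type} [MeasurableSpace Ω] [StandardBorelSpace Ω] [Nonempty Ω]
    [MeasurableSpace α] [MeasurableSingletonClass α] [Fintype α]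
    [MeasurableSpace β] [MeasurableSingletonClass β] [Fintype β]
    (μ : Measure Ω) [IsProbabilityMeasure μ]
    (X X' : Ω → α) (Y : Ω → β)
    (hX : Measurable X) (hX' : Measurable X') (hY : Measurable Y)
    (hMarkov : CondIndepFun (MeasurableSpace.comap Y inferInstance) hY.comap_le X X' μ)
    (hBackward : ∀ (x : α) (y : β),
      μ (X' ⁻¹' {x} ∩ Y ⁻¹' {y}) = μ (X ⁻¹' {x} ∩ Y ⁻¹' {y})) :
    maxCorr μ X X' = (maxCorr μ X Y)^2 := by
  classical
  unfold maxCorr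
  refine core_thm (P := fun x y => (μ (X ⁻¹' {x} ∩ Y ⁻¹' {y})).toReal)
    (fun _ _ => ENNReal.toReal_nonneg) _ _ ?_ ?_
  · intro r
    constructor
    · rintro ⟨g, f, -, -, e1, e2, e3, e4, e5⟩
      refine ⟨g, f, ⟨?_, ?_⟩, ?_, ?_, ?_⟩
      · exact (trX μ X Y hX hY g).symm.trans e1
      · exact (trX μ X Y hX hY (fun x => g x ^ 2)).symm.trans e3
      · exact (trY μ X Y hX hY f).symm.trans e2
      · exact (trY μ X Y hX hY (fun y => f y ^ 2)).symm.trans e4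
      · exact e5.trans (trXY μ X Y hX hY g f)
    · rintro ⟨g, f, ⟨h1, h2⟩, h3, h4, h5⟩
      refine ⟨g, f, measurable_of_countable g, measurable_of_countable f, ?_, ?_, ?_, ?_, ?_⟩
      · exact (trX μ X Y hX hY g).trans h1
      · exact (trY μ X Y hX hY f).trans h3
      · exact (trX μ X Y hX hY (fun x => g x ^ 2)).trans h2
      · exact (trY μ X Y hX hY (fun y => f y ^ 2)).trans h4
      · exact h5.trans (trXY μ X Y hX hY g f).symm
  · intro t
    constructor
    · rintro ⟨g, h, -, -, e1, e2, e3, e4, e5⟩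
      refine ⟨g, h, ⟨?_, ?_⟩, ⟨?_, ?_⟩, ?_⟩
      · exact (trX μ X Y hX hY g).symm.trans e1
      · exact (trX μ X Y hX hY (fun x => g x ^ 2)).symm.trans e3
      · exact (trXp μ X X' Y hX' hY hBackward h).symm.trans e2
      · exact (trXp μ X X' Y hX' hY hBackward (fun x => h x ^ 2)).symm.trans e4
      · exact e5.trans (trXXp μ X X' Y hX hX' hY hMarkov hBackward g h)
    · rintro ⟨g, h, ⟨h1, h2⟩, ⟨h3, h4⟩, h5⟩
      refine ⟨g, h, measurable_of_countable g, measurable_of_countable h, ?_, ?_, ?_, ?_, ?_⟩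
      · exact (trX μ X Y hX hY g).trans h1
      · exact (trXp μ X X' Y hX' hY hBackward h).trans h3
      · exact (trX μ X Y hX hY (fun x => g x ^ 2)).trans h2
      · exact (trXp μ X X' Y hX' hY hBackward (fun x => h x ^ 2)).trans h4
      · exact h5.trans (trXXp μ X X' Y hX hX' hY hMarkov hBackward g h).symm
end

section
/- For finitely-valued (X,Y) with min{|𝒳|,|𝒴|} = 2, ρ_m²(X;Y) ≥ 2^{I(X;Y)} − 1, where I(X;Y) is the mutual information in bits. -/
open MeasureTheory ProbabilityTheory Real

variable {Ω α β : Type} [MeasurableSpace Ω]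
  [MeasurableSpace α] [MeasurableSingletonClass α] [Fintype α]
  [MeasurableSpace β] [MeasurableSingletonClass β] [Fintype β]

/-- Joint pmf of finitely-valued (X,Y). -/
noncomputable def pJoint (μ : Measure Ω) (X : Ω → α) (Y : Ω → β) (x : α) (y : β) : ℝ :=
  (μ (X ⁻¹' {x} ∩ Y ⁻¹' {y})).toReal

/-- Marginal pmf. -/
noncomputable def pMarg (μ : Measure Ω) (X : Ω → α) (x : α) : ℝ := (μ (X ⁻¹' {x})).toReal

/-- χ²-divergence between the joint pmf and the product of marginals. -/
noncomputable def chiSq (μ : Measure Ω) (X : Ω → α) (Y : Ω → β) : ℝ :=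
  (∑ x : α, ∑ y : β, (pJoint μ X Y x y)^2 / (pMarg μ X x * pMarg μ Y y)) - 1

/-- Mutual information in bits for finitely-valued (X,Y). -/
noncomputable def miFin (μ : Measure Ω) (X : Ω → α) (Y : Ω → β) : ℝ :=
  ∑ x : α, ∑ y : β,
    pJoint μ X Y x y * Real.logb 2 (pJoint μ X Y x y / (pMarg μ X x * pMarg μ Y y))
section Aux
variable {μ : Measure Ω} [IsProbabilityMeasure μ] {X : Ω → α} {Y : Ω → β}

lemma algAux (qy dd s1 s2 v : ℝ) (hq : qy ≠ 0) (hs1 : s1 ≠ 0) (hs2 : s2 ≠ 0) (hv : v ≠ 0)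
    (h1 : s1^2 + s2^2 = 1) :
    (s1^2 * qy + dd) * (s2/s1 * (dd/(qy*(s1*s2*v)))) +
      (s2^2*qy - dd) * (-(s1/s2) * (dd/(qy*(s1*s2*v)))) = dd^2/qy * (s1^2*s2^2*v)⁻¹ := by
  field_simp
  linear_combination dd^2 * h1

lemma int_comp1 (hX : Measurable X) (g : α → ℝ) :
    ∫ ω, g (X ω) ∂μ = ∑ x, pMarg μ X x * g x := by
  rw [← integral_map hX.aemeasurable (measurable_of_countable g).aestronglyMeasurable]
  haveI : IsProbabilityMeasure (μ.map X) := Measure.isProbabilityMeasure_map hX.aemeasurable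
  rw [integral_fintype (.of_finite)]
  simp only [smul_eq_mul, measureReal_def, Measure.map_apply hX (measurableSet_singleton _), pMarg]

lemma int_comp2 (hX : Measurable X) (hY : Measurable Y) (h : α → β → ℝ) :
    ∫ ω, h (X ω) (Y ω) ∂μ = ∑ x, ∑ y, pJoint μ X Y x y * h x y := by
  have hT : Measurable (fun ω => (X ω, Y ω)) := hX.prodMk hY
  have e1 := (integral_map (μ := μ) hT.aemeasurable
    (measurable_of_countable (fun p : α × β => h p.1 p.2)).aestronglyMeasurable).symm
  rw [show (fun ω => h (X ω) (Y ω)) = fun ω => (fun p : α × β => h p.1 p.2) (X ω, Y ω) from rfl] at *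
  rw [e1]
  haveI : IsProbabilityMeasure (μ.map (fun ω => (X ω, Y ω))) :=
    Measure.isProbabilityMeasure_map hT.aemeasurable
  rw [integral_fintype (.of_finite), Fintype.sum_prod_type]
  refine Finset.sum_congr rfl fun x _ => Finset.sum_congr rfl fun y _ => ?_
  rw [smul_eq_mul, measureReal_def, Measure.map_apply hT (measurableSet_singleton _)]
  have : (fun ω => (X ω, Y ω)) ⁻¹' {(x, y)} = X ⁻¹' {x} ∩ Y ⁻¹' {y} := by
    ext ω; simp [Prod.ext_iff]
  rw [this]; rfl

omit [MeasurableSingletonClass α] [Fintype α] [MeasurableSingletonClass β] [Fintype β]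
  [IsProbabilityMeasure μ] in
lemma pJoint_nonneg (x : α) (y : β) : 0 ≤ pJoint μ X Y x y := ENNReal.toReal_nonneg

lemma sum_pJoint_right (hX : Measurable X) (hY : Measurable Y) (x0 : α) :
    ∑ y, pJoint μ X Y x0 y = pMarg μ X x0 := by
  classical
  have h1 := int_comp2 (μ := μ) hX hY (fun x _ => if x = x0 then (1:ℝ) else 0)
  have h2 := int_comp1 (μ := μ) hX (fun x => if x = x0 then (1:ℝ) else 0)
  rw [h1] at h2
  simpa [Finset.sum_ite_eq', mul_ite] using h2

lemma sum_pJoint_left (hX : Measurable X) (hY : Measurable Y) (y0 : β) :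
    ∑ x, pJoint μ X Y x y0 = pMarg μ Y y0 := by
  classical
  have h1 := int_comp2 (μ := μ) hX hY (fun _ y => if y = y0 then (1:ℝ) else 0)
  have h2 := int_comp1 (μ := μ) hY (fun y => if y = y0 then (1:ℝ) else 0)
  rw [h1] at h2
  simpa [Finset.sum_ite_eq', mul_ite] using h2

omit [MeasurableSingletonClass β] [Fintype β] in
lemma sum_pMarg (hX : Measurable X) : ∑ x, pMarg μ X x = 1 := by
  have h := int_comp1 (μ := μ) hX (fun _ => (1:ℝ))
  simp only [integral_const, measureReal_def, measure_univ, ENNReal.toReal_one, smul_eq_mul, one_mul,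
    mul_one] at h
  exact h.symm



lemma jensen (hX : Measurable X) (hY : Measurable Y)
    (hpX : ∀ x : α, 0 < pMarg μ X x) (hpY : ∀ y : β, 0 < pMarg μ Y y) :
    (2:ℝ) ^ (miFin μ X Y) - 1 ≤ chiSq μ X Y := by
  set w : α × β → ℝ := fun p => pJoint μ X Y p.1 p.2 with hw
  set r : α × β → ℝ := fun p => pJoint μ X Y p.1 p.2 / (pMarg μ X p.1 * pMarg μ Y p.2) with hr
  have hw0 : ∀ p ∈ Finset.univ (α := α × β), 0 ≤ w p := fun p _ => pJoint_nonneg _ _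
  have hw1 : ∑ p : α × β, w p = 1 := by
    rw [Fintype.sum_prod_type]
    rw [Finset.sum_congr rfl fun x _ => sum_pJoint_right (μ := μ) hX hY x]
    exact sum_pMarg hX
  have key := convexOn_exp.map_sum_le hw0 hw1 (fun p _ => Set.mem_univ (Real.log (r p)))
  have hlog2 : Real.log 2 ≠ 0 := ne_of_gt (Real.log_pos (by norm_num))
  -- LHS identification
  have hLHS : (2:ℝ) ^ (miFin μ X Y) = Real.exp (∑ p : α × β, w p • Real.log (r p)) := by
    rw [Real.rpow_def_of_pos (by norm_num : (0:ℝ) < 2)]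
    congr 1
    rw [miFin, Fintype.sum_prod_type, Finset.mul_sum]
    refine Finset.sum_congr rfl fun x _ => ?_
    rw [Finset.mul_sum]
    refine Finset.sum_congr rfl fun y _ => ?_
    simp only [smul_eq_mul, hw, hr]
    rw [Real.logb]
    field_simp
  -- RHS identification
  have hRHS : ∑ p : α × β, w p • Real.exp (Real.log (r p)) = chiSq μ X Y + 1 := by
    rw [chiSq, sub_add_cancel, Fintype.sum_prod_type]
    refine Finset.sum_congr rfl fun x _ => Finset.sum_congr rfl fun y _ => ?_
    rcases eq_or_lt_of_le (pJoint_nonneg (μ := μ) (X := X) (Y := Y) x y) with h0 | h0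
    · simp only [smul_eq_mul, hw, hr, ← h0]
      simp
    · have hrpos : 0 < r (x, y) := div_pos h0 (mul_pos (hpX x) (hpY y))
      rw [smul_eq_mul, Real.exp_log hrpos]
      simp only [hw, hr]
      rw [pow_two, mul_div_assoc]
  rw [hLHS] at *
  linarith [key.trans_eq hRHS]


lemma mem_le_one (hX : Measurable X) (hY : Measurable Y) {r : ℝ}
    (hr : r ∈ {r : ℝ | ∃ (g : α → ℝ) (f : β → ℝ), Measurable g ∧ Measurable f ∧
      (∫ ω, g (X ω) ∂μ) = 0 ∧ (∫ ω, f (Y ω) ∂μ) = 0 ∧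
      (∫ ω, (g (X ω))^2 ∂μ) = 1 ∧ (∫ ω, (f (Y ω))^2 ∂μ) = 1 ∧
      r = ∫ ω, g (X ω) * f (Y ω) ∂μ}) : r ≤ 1 := by
  obtain ⟨g, f, -, -, -, -, hg2, hf2, hr⟩ := hr
  rw [int_comp2 hX hY (fun x y => g x * f y)] at hr
  rw [int_comp1 hX (fun x => (g x)^2)] at hg2
  rw [int_comp1 hY (fun y => (f y)^2)] at hf2
  have key := Finset.sum_mul_sq_le_sq_mul_sq (Finset.univ : Finset (α × β))
    (fun p => Real.sqrt (pJoint μ X Y p.1 p.2) * g p.1)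
    (fun p => Real.sqrt (pJoint μ X Y p.1 p.2) * f p.2)
  have e0 : ∀ p : α × β, (Real.sqrt (pJoint μ X Y p.1 p.2) * g p.1) *
      (Real.sqrt (pJoint μ X Y p.1 p.2) * f p.2) = pJoint μ X Y p.1 p.2 * (g p.1 * f p.2) := by
    intro p
    rw [show Real.sqrt (pJoint μ X Y p.1 p.2) * g p.1 * (Real.sqrt (pJoint μ X Y p.1 p.2) * f p.2)
      = (Real.sqrt (pJoint μ X Y p.1 p.2) * Real.sqrt (pJoint μ X Y p.1 p.2)) * (g p.1 * f p.2)
      from by ring, Real.mul_self_sqrt (pJoint_nonneg _ _)]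
  have e1 : ∑ p : α × β, (Real.sqrt (pJoint μ X Y p.1 p.2) * g p.1) *
      (Real.sqrt (pJoint μ X Y p.1 p.2) * f p.2) = r := by
    rw [hr, Fintype.sum_prod_type]
    exact Finset.sum_congr rfl fun x _ => Finset.sum_congr rfl fun y _ => e0 (x, y)
  have e2 : ∑ p : α × β, (Real.sqrt (pJoint μ X Y p.1 p.2) * g p.1)^2 = 1 := by
    rw [← hg2, Fintype.sum_prod_type]
    refine Finset.sum_congr rfl fun x _ => ?_
    have h' : ∀ y : β, (Real.sqrt (pJoint μ X Y x y) * g x)^2 = pJoint μ X Y x y * (g x)^2 :=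
      fun y => by rw [mul_pow, Real.sq_sqrt (pJoint_nonneg _ _)]
    rw [Finset.sum_congr rfl fun y _ => h' y, ← Finset.sum_mul,
      sum_pJoint_right (μ := μ) hX hY x]
  have e3 : ∑ p : α × β, (Real.sqrt (pJoint μ X Y p.1 p.2) * f p.2)^2 = 1 := by
    rw [← hf2, Fintype.sum_prod_type, Finset.sum_comm]
    refine Finset.sum_congr rfl fun y _ => ?_
    have h' : ∀ x : α, (Real.sqrt (pJoint μ X Y x y) * f y)^2 = pJoint μ X Y x y * (f y)^2 :=
      fun x => by rw [mul_pow, Real.sq_sqrt (pJoint_nonneg _ _)]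
    rw [Finset.sum_congr rfl fun x _ => h' x, ← Finset.sum_mul,
      sum_pJoint_left (μ := μ) hX hY y]
  rw [e1, e2, e3, one_mul] at key
  nlinarith [key]

lemma sqrt_chiSq_mem (hX : Measurable X) (hY : Measurable Y)
    (hpX : ∀ x : α, 0 < pMarg μ X x) (hpY : ∀ y : β, 0 < pMarg μ Y y)
    (hA : Fintype.card α = 2) (hchi : 0 < chiSq μ X Y) :
    Real.sqrt (chiSq μ X Y) ∈ {r : ℝ | ∃ (g : α → ℝ) (f : β → ℝ), Measurable g ∧ Measurable f ∧
      (∫ ω, g (X ω) ∂μ) = 0 ∧ (∫ ω, f (Y ω) ∂μ) = 0 ∧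
      (∫ ω, (g (X ω))^2 ∂μ) = 1 ∧ (∫ ω, (f (Y ω))^2 ∂μ) = 1 ∧
      r = ∫ ω, g (X ω) * f (Y ω) ∂μ} := by
  classical
  obtain ⟨a1, a2, hne, huniv⟩ := (Finset.card_eq_two (s := Finset.univ)).mp (by simpa using hA)
  set p1 := pMarg μ X a1 with hp1def
  set p2 := pMarg μ X a2 with hp2def
  set q : β → ℝ := pMarg μ Y with hqdef
  set d : β → ℝ := fun y => pJoint μ X Y a1 y - p1 * q y with hddef
  set χ := chiSq μ X Y with hχdef
  set s1 := Real.sqrt p1 with hs1def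
  set s2 := Real.sqrt p2 with hs2def
  set v := Real.sqrt χ with hvdef
  have hp1 : 0 < p1 := hpX a1
  have hp2 : 0 < p2 := hpX a2
  have hs1 : 0 < s1 := Real.sqrt_pos.mpr hp1
  have hs2 : 0 < s2 := Real.sqrt_pos.mpr hp2
  have hv : 0 < v := Real.sqrt_pos.mpr hchi
  have hs1sq : s1^2 = p1 := Real.sq_sqrt hp1.le
  have hs2sq : s2^2 = p2 := Real.sq_sqrt hp2.le
  have hvsq : v^2 = χ := Real.sq_sqrt hchi.le
  have hsumα : ∀ f : α → ℝ, ∑ x : α, f x = f a1 + f a2 := fun f => by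
    rw [huniv, Finset.sum_pair hne]
  have hF1 : p1 + p2 = 1 := by
    have := sum_pMarg (μ := μ) hX
    rwa [hsumα] at this
  have hq : ∀ y, 0 < q y := hpY
  have hqsum : ∑ y, q y = 1 := sum_pMarg (μ := μ) hY
  have hF2 : ∀ y, pJoint μ X Y a2 y = q y - pJoint μ X Y a1 y := by
    intro y
    have := sum_pJoint_left (μ := μ) hX hY y
    rw [hsumα] at this
    linarith
  have hF3 : ∑ y, d y = 0 := by
    simp only [hddef, Finset.sum_sub_distrib, ← Finset.mul_sum, hqsum,
      sum_pJoint_right (μ := μ) hX hY a1, mul_one, hp1def, sub_self]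
  have hF4 : χ = ∑ y, (d y)^2 / (p1 * p2 * q y) := by
    have per : ∀ y : β, (pJoint μ X Y a1 y)^2 / (p1 * q y) + (pJoint μ X Y a2 y)^2 / (p2 * q y)
        = q y + (d y)^2 / (p1 * p2 * q y) := by
      intro y
      rw [hF2 y, hddef]
      have h2 : p2 = 1 - p1 := by linarith
      have h3 : (1:ℝ) - p1 ≠ 0 := by rw [← h2]; exact hp2.ne'
      rw [h2]
      field_simp [hp1.ne', h3, (hq y).ne']
      ring
    rw [hχdef, chiSq, Finset.sum_comm]
    have : ∀ y : β, ∑ x : α, (pJoint μ X Y x y)^2 / (pMarg μ X x * pMarg μ Y y)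
        = q y + (d y)^2 / (p1 * p2 * q y) := by
      intro y
      rw [hsumα (fun x => (pJoint μ X Y x y)^2 / (pMarg μ X x * pMarg μ Y y))]
      exact per y
    rw [Finset.sum_congr rfl fun y _ => this y, Finset.sum_add_distrib, hqsum]
    ring
  have hdsum : ∑ y, (d y)^2 / q y = p1 * p2 * χ := by
    rw [hF4, Finset.mul_sum]
    refine Finset.sum_congr rfl fun y _ => ?_
    have h := mul_div_mul_left (d y ^ 2) (q y) (mul_pos hp1 hp2).ne'
    rw [← h]
    ring
  -- the witnesses
  set g : α → ℝ := fun a => if a = a1 then s2 / s1 else -(s1 / s2) with hgdef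
  set f : β → ℝ := fun y => d y / (q y * (s1 * s2 * v)) with hfdef
  have hga1 : g a1 = s2 / s1 := by simp [hgdef]
  have hga2 : g a2 = -(s1 / s2) := by simp [hgdef, hne.symm]
  clear_value p1 p2 q d χ s1 s2 v
  refine ⟨g, f, measurable_of_countable g, measurable_of_countable f, ?_, ?_, ?_, ?_, ?_⟩
  · rw [int_comp1 hX g, hsumα (fun x => pMarg μ X x * g x)]
    simp only [hga1, hga2, ← hp1def, ← hp2def]
    field_simp [hs1.ne', hs2.ne']
    nlinarith [hs1sq, hs2sq]
  · rw [int_comp1 hY f]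
    have : ∀ y, pMarg μ Y y * f y = d y * (s1 * s2 * v)⁻¹ := by
      intro y
      simp only [← hqdef]
      rw [hfdef]
      field_simp [ne_of_gt (hq y)]
    rw [Finset.sum_congr rfl fun y _ => this y, ← Finset.sum_mul, hF3, zero_mul]
  · rw [int_comp1 hX (fun x => (g x)^2), hsumα (fun x => pMarg μ X x * (g x)^2)]
    simp only [hga1, hga2, ← hp1def, ← hp2def, neg_sq, div_pow, hs1sq, hs2sq]
    field_simp [hp1.ne', hp2.ne']
    linarith
  · rw [int_comp1 hY (fun y => (f y)^2)]
    have : ∀ y, pMarg μ Y y * (f y)^2 = (d y)^2 / q y * (p1 * p2 * χ)⁻¹ := by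
      intro y
      simp only [← hqdef]
      rw [hfdef]
      simp only [div_pow, mul_pow]
      rw [hs1sq, hs2sq, hvsq]
      field_simp [(hq y).ne', hp1.ne', hp2.ne', hchi.ne']
    rw [Finset.sum_congr rfl fun y _ => this y, ← Finset.sum_mul, hdsum]
    exact mul_inv_cancel₀ (by positivity)
  · rw [int_comp2 hX hY (fun x y => g x * f y)]
    rw [Finset.sum_comm]
    have key : ∀ y, ∑ x : α, pJoint μ X Y x y * (g x * f y)
        = (d y)^2 / q y * (p1 * p2 * v)⁻¹ := by
      intro y
      rw [hsumα (fun x => pJoint μ X Y x y * (g x * f y)), hga1, hga2, hF2 y, hfdef]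
      have hj1 : pJoint μ X Y a1 y = p1 * q y + d y := by rw [hddef]; ring
      rw [hj1]
      have hq' : q y ≠ 0 := ne_of_gt (hq y)
      have h2 : q y - (p1 * q y + d y) = p2 * q y - d y := by
        have : p2 = 1 - p1 := by linarith
        rw [this]; ring
      rw [h2, ← hs1sq, ← hs2sq]
      exact algAux (q y) (d y) s1 s2 v hq' hs1.ne' hs2.ne' hv.ne'
        (by rw [hs1sq, hs2sq]; exact hF1)
    rw [Finset.sum_congr rfl fun y _ => key y, ← Finset.sum_mul, hdsum]
    rw [show p1 * p2 * χ * (p1 * p2 * v)⁻¹ = v from by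
      rw [← hvsq]
      field_simp [hp1.ne', hp2.ne', hv.ne']]

lemma mainA (hX : Measurable X) (hY : Measurable Y)
    (hpX : ∀ x : α, 0 < pMarg μ X x) (hpY : ∀ y : β, 0 < pMarg μ Y y)
    (hA : Fintype.card α = 2) :
    (maxCorr μ X Y)^2 ≥ (2:ℝ) ^ (miFin μ X Y) - 1 := by
  have hjen := jensen (μ := μ) hX hY hpX hpY
  by_cases hchi : 0 < chiSq μ X Y
  · have hbdd : BddAbove {r : ℝ | ∃ (g : α → ℝ) (f : β → ℝ), Measurable g ∧ Measurable f ∧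
        (∫ ω, g (X ω) ∂μ) = 0 ∧ (∫ ω, f (Y ω) ∂μ) = 0 ∧
        (∫ ω, (g (X ω))^2 ∂μ) = 1 ∧ (∫ ω, (f (Y ω))^2 ∂μ) = 1 ∧
        r = ∫ ω, g (X ω) * f (Y ω) ∂μ} := ⟨1, fun r hr => mem_le_one hX hY hr⟩
    have hle : Real.sqrt (chiSq μ X Y) ≤ maxCorr μ X Y :=
      le_csSup hbdd (sqrt_chiSq_mem hX hY hpX hpY hA hchi)
    have h2 : Real.sqrt (chiSq μ X Y) ^ 2 ≤ (maxCorr μ X Y)^2 :=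
      pow_le_pow_left₀ (Real.sqrt_nonneg _) hle 2
    rw [Real.sq_sqrt hchi.le] at h2
    linarith
  · push_neg at hchi
    have h2 : (0:ℝ) ≤ (maxCorr μ X Y)^2 := sq_nonneg _
    linarith

omit [MeasurableSingletonClass α] [Fintype α] [MeasurableSingletonClass β] [Fintype β]
  [IsProbabilityMeasure μ] in
lemma maxCorr_symm : maxCorr μ X Y = maxCorr μ Y X := by
  unfold maxCorr
  congr 1
  ext r
  constructor
  · rintro ⟨g, f, hg, hf, h1, h2, h3, h4, h5⟩
    exact ⟨f, g, hf, hg, h2, h1, h4, h3, by rw [h5]; simp_rw [mul_comm]⟩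
  · rintro ⟨g, f, hg, hf, h1, h2, h3, h4, h5⟩
    exact ⟨f, g, hf, hg, h2, h1, h4, h3, by rw [h5]; simp_rw [mul_comm]⟩

omit [IsProbabilityMeasure μ] in
lemma miFin_symm : miFin μ X Y = miFin μ Y X := by
  rw [miFin, miFin, Finset.sum_comm]
  refine Finset.sum_congr rfl fun y _ => Finset.sum_congr rfl fun x _ => ?_
  rw [show pJoint μ Y X y x = pJoint μ X Y x y from by rw [pJoint, pJoint, Set.inter_comm],
    mul_comm (pMarg μ Y y)]

end Aux

/-- For finitely-valued (X,Y) with min{|𝒳|,|𝒴|} = 2 and positive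
marginals, ρ_m²(X;Y) ≥ 2^{I(X;Y)} − 1 (mutual information in bits). -/
theorem stmt10 (μ : Measure Ω) [IsProbabilityMeasure μ]
    (X : Ω → α) (Y : Ω → β) (hX : Measurable X) (hY : Measurable Y)
    (hpX : ∀ x : α, 0 < pMarg μ X x) (hpY : ∀ y : β, 0 < pMarg μ Y y)
    (hcard : min (Fintype.card α) (Fintype.card β) = 2) :
    (maxCorr μ X Y)^2 ≥ (2:ℝ) ^ (miFin μ X Y) - 1 := by
  have hA : Fintype.card α = 2 ∨ Fintype.card β = 2 := by omega
  rcases hA with hA | hB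
  · exact mainA hX hY hpX hpY hA
  · rw [maxCorr_symm, miFin_symm]
    exact mainA hY hX hpY hpX hB
end
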